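/- Let F be the free group on generators a, b, c. Set x = abc, y = c, z = a, and let α be the automorphism of F with α(x) = x, α(y) = xyx⁻¹, α(z) = (xy)z(xy)⁻¹. Then the fixed subgroup of α is the cyclic subgroup generated by x. -/

import Mathlib

open FreeGroup List

variable {α : Type*} [DecidableEq α]

/-- non-cancelling adjacency -/
def NC (u v : α × Bool) : Prop := ¬(u.1 = v.1 ∧ u.2 = !v.2)

instance : DecidableRel (NC (α := α)) := fun _ _ => by unfold NC; infer_instance

theorem reduce_eq_self_iff (L : List (α × Bool)) :
    FreeGroup.reduce L = L ↔ List.Chain' NC L := by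
  induction L with
  | nil => simp [List.Chain', List.isChain_nil]
  | cons x L ih =>
    constructor
    · intro h
      rw [FreeGroup.reduce.cons] at h
      rcases hL : FreeGroup.reduce L with _ | ⟨y, t⟩
      · rw [hL] at h
        have h' : [x] = x :: L := h
        have : L = [] := by injection h' with _ h2; exact h2.symm
        subst this; simp [List.Chain', List.isChain_singleton]
      · rw [hL] at h
        have h' : (if x.1 = y.1 ∧ x.2 = !y.2 then t else x :: y :: t) = x :: L := h
        by_cases hc : x.1 = y.1 ∧ x.2 = !y.2
        · rw [if_pos hc] at h'
          exfalso
          have h1 : (FreeGroup.reduce L).length ≤ L.length :=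
            (FreeGroup.reduce.red (L := L)).length_le
          rw [hL] at h1
          have : t.length = L.length + 1 := by rw [h']; simp
          simp at h1; omega
        · rw [if_neg hc] at h'
          have hLt : L = y :: t := by injection h' with _ h2; exact h2.symm
          have : FreeGroup.reduce L = L := by rw [hL, hLt]
          rw [hLt]
          exact List.isChain_cons_cons.mpr ⟨hc, by rw [← hLt]; exact ih.mp this⟩
    · intro h
      rcases hLt : L with _ | ⟨y, t⟩
      · rfl
      · subst hLt
        have hch := List.isChain_cons_cons.mp h
        have hred : FreeGroup.reduce (y :: t) = y :: t := ih.mpr hch.2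
        rw [FreeGroup.reduce.cons, hred]
        show (if x.1 = y.1 ∧ x.2 = !y.2 then t else x :: y :: t) = x :: y :: t
        rw [if_neg hch.1]


theorem chain'_toWord (g : FreeGroup α) : List.Chain' NC g.toWord :=
  (reduce_eq_self_iff _).mp g.reduce_toWord

theorem toWord_mk_eq {L : List (α × Bool)} (h : List.Chain' NC L) :
    (FreeGroup.mk L).toWord = L := by
  rw [FreeGroup.toWord_mk, (reduce_eq_self_iff L).mpr h]

/-- `g` avoids letters satisfying `p`. -/
def Avoid (p : α → Bool) (g : FreeGroup α) : Prop := ∀ l ∈ g.toWord, p l.1 = false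

/-- the head of `g`'s reduced word does not cancel with `(j, e)` on the left. -/
def HeadOK (j : α) (e : Bool) (g : FreeGroup α) : Prop :=
  ∀ l ∈ g.toWord.head?, ¬(l.1 = j ∧ l.2 = !e)

theorem normal_form {p : α → Bool} {u : FreeGroup α} (hu : Avoid p u) {j : α} {e : Bool}
    (hj : p j = true) {v : FreeGroup α} (hv : HeadOK j e v) :
    (u * FreeGroup.mk [(j, e)] * v).toWord = u.toWord ++ (j, e) :: v.toWord := by
  have h1 : u * FreeGroup.mk [(j, e)] * v = FreeGroup.mk (u.toWord ++ (j, e) :: v.toWord) := by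
    conv_lhs => rw [← FreeGroup.mk_toWord (x := u), ← FreeGroup.mk_toWord (x := v)]
    rw [FreeGroup.mul_mk, FreeGroup.mul_mk]
    simp
  rw [h1]
  apply toWord_mk_eq
  simp only [List.Chain']; rw [List.isChain_append]
  refine ⟨chain'_toWord u, ?_, ?_⟩
  · rw [List.isChain_cons]
    refine ⟨?_, chain'_toWord v⟩
    intro y hy
    have := hv y hy
    intro ⟨h1', h2'⟩
    exact this ⟨h1'.symm, by cases e <;> cases y.2 <;> simp_all⟩
  · intro x hx y hy
    have hx' : x ∈ u.toWord := List.mem_of_mem_getLast? hx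
    have : p x.1 = false := hu x hx'
    have hy' : y = (j, e) := by cases hy; rfl
    intro ⟨h1', _⟩
    rw [hy'] at h1'
    rw [h1'] at this
    rw [hj] at this
    simp at this

theorem split_unique {p : α → Bool} : ∀ {A A' : List (α × Bool)} {x x' : α × Bool}
    {B B' : List (α × Bool)}, (∀ l ∈ A, p l.1 = false) → (∀ l ∈ A', p l.1 = false) →
    p x.1 = true → p x'.1 = true →
    A ++ x :: B = A' ++ x' :: B' → A = A' ∧ x = x' ∧ B = B' := by
  intro A
  induction A with
  | nil =>
    intro A' x x' B B' _ hA' hx hx' h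
    cases A' with
    | nil => simpa using h
    | cons a t =>
      exfalso
      have hxa : x = a := by injection h
      have h1 := hA' a (by simp)
      rw [← hxa, hx] at h1
      simp at h1
  | cons a A ih =>
    intro A' x x' B B' hA hA' hx hx' h
    cases A' with
    | nil =>
      exfalso
      have : a = x' := by injection h
      have h1 := hA a (by simp)
      rw [this, hx'] at h1
      simp at h1
    | cons a' t =>
      injection h with h1 h2
      obtain ⟨e1, e2, e3⟩ := ih (fun l hl => hA l (by simp [hl])) (fun l hl => hA' l (by simp [hl])) hx hx' h2
      exact ⟨by rw [h1, e1], e2, e3⟩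

theorem exists_split {p : α → Bool} {g : FreeGroup α}
    (hg : ∃ l ∈ g.toWord, p l.1 = true) :
    ∃ (u : FreeGroup α) (j : α) (e : Bool) (v : FreeGroup α),
      Avoid p u ∧ p j = true ∧ HeadOK j e v ∧ g = u * FreeGroup.mk [(j, e)] * v ∧
      g.toWord = u.toWord ++ (j, e) :: v.toWord := by
  classical
  set L := g.toWord with hL
  set q : α × Bool → Bool := fun l => !(p l.1) with hq
  have hsplit := List.takeWhile_append_dropWhile (p := q) (l := L)
  have hdrop_ne : L.dropWhile q ≠ [] := by
    obtain ⟨l, hl, hpl⟩ := hg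
    intro hnil
    have := (List.dropWhile_eq_nil_iff).mp hnil l hl
    rw [hq] at this; simp [hpl] at this
  obtain ⟨x, B, hxB⟩ : ∃ x B, L.dropWhile q = x :: B :=
    List.exists_cons_of_ne_nil hdrop_ne
  have hx : q x = false := by
    have := List.head_dropWhile_not q (l := L) (by rw [hxB]; simp)
    simp only [hxB, List.head_cons] at this
    exact this
  have hxp : p x.1 = true := by rw [hq] at hx; simpa using hx
  set A := L.takeWhile q with hA
  have hchain : List.Chain' NC L := chain'_toWord g
  have hAchain : List.Chain' NC A := List.IsChain.prefix hchain (List.takeWhile_prefix q)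
  have hdchain : List.Chain' NC (x :: B) := by
    rw [← hxB]; exact List.IsChain.suffix hchain (List.dropWhile_suffix q)
  have hBchain : List.Chain' NC B := List.IsChain.tail hdchain
  refine ⟨FreeGroup.mk A, x.1, x.2, FreeGroup.mk B, ?_, hxp, ?_, ?_, ?_⟩
  · intro l hl
    rw [toWord_mk_eq hAchain] at hl
    have := List.mem_takeWhile_imp hl
    rw [hq] at this; simpa using this
  · intro l hl
    rw [toWord_mk_eq hBchain] at hl
    have hadj := (List.isChain_cons.mp hdchain).1 l hl
    intro ⟨h1, h2⟩
    exact hadj ⟨h1.symm, by rw [h2, Bool.not_not]⟩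
  · conv_lhs => rw [← FreeGroup.mk_toWord (x := g), ← hL, ← hsplit]
    rw [FreeGroup.mul_mk, FreeGroup.mul_mk, hxB]
    simp
  · rw [toWord_mk_eq hAchain, toWord_mk_eq hBchain, ← hsplit, hxB]


-- new material

theorem split_unique' {p : α → Bool} {u u' : FreeGroup α} {j j' : α} {e e' : Bool}
    {v v' : FreeGroup α} (hu : Avoid p u) (hu' : Avoid p u') (hj : p j = true)
    (hj' : p j' = true) (hv : HeadOK j e v) (hv' : HeadOK j' e' v')
    (h : u * FreeGroup.mk [(j, e)] * v = u' * FreeGroup.mk [(j', e')] * v') :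
    u = u' ∧ j = j' ∧ e = e' ∧ v = v' := by
  have hw := congrArg FreeGroup.toWord h
  rw [normal_form hu hj hv, normal_form hu' hj' hv'] at hw
  obtain ⟨h1, h2, h3⟩ := split_unique hu hu' hj hj' hw
  have e2 : j = j' ∧ e = e' := by
    constructor
    · exact congrArg Prod.fst h2
    · exact congrArg Prod.snd h2
  refine ⟨?_, e2.1, e2.2, ?_⟩
  · rw [← FreeGroup.mk_toWord (x := u), ← FreeGroup.mk_toWord (x := u'), h1]
  · rw [← FreeGroup.mk_toWord (x := v), ← FreeGroup.mk_toWord (x := v'), h3]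

theorem Avoid.one {p : α → Bool} : Avoid p (1 : FreeGroup α) := by
  intro l hl; rw [FreeGroup.toWord_one] at hl; simp at hl

theorem Avoid.mul {p : α → Bool} {g h : FreeGroup α} (hg : Avoid p g) (hh : Avoid p h) :
    Avoid p (g * h) := by
  intro l hl
  have := (FreeGroup.toWord_mul_sublist g h).mem hl
  rw [List.mem_append] at this
  rcases this with h' | h'
  · exact hg l h'
  · exact hh l h'

theorem Avoid.inv {p : α → Bool} {g : FreeGroup α} (hg : Avoid p g) : Avoid p g⁻¹ := by
  intro l hl
  rw [FreeGroup.toWord_inv, FreeGroup.invRev, List.mem_reverse, List.mem_map] at hl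
  obtain ⟨l', hl', rfl⟩ := hl
  exact hg l' hl'

/-- elements avoiding `p` form a subgroup -/
def avoidSubgroup (p : α → Bool) : Subgroup (FreeGroup α) where
  carrier := {g | Avoid p g}
  one_mem' := Avoid.one
  mul_mem' := Avoid.mul
  inv_mem' := Avoid.inv

theorem avoid_of {p : α → Bool} {i : α} (h : p i = false) : Avoid p (FreeGroup.of i) := by
  intro l hl
  rw [FreeGroup.toWord_of] at hl
  simp at hl
  rw [hl, h]

theorem headOK_of_avoid {p : α → Bool} {j : α} (hj : p j = true) {e : Bool} {g : FreeGroup α}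
    (hg : Avoid p g) : HeadOK j e g := by
  intro l hl
  have : l ∈ g.toWord := by
    cases hw : g.toWord.head? with
    | none => rw [hw] at hl; simp at hl
    | some y =>
      rw [hw] at hl
      cases hl
      exact List.mem_of_mem_head? hw
  intro ⟨h1, _⟩
  have := hg l this
  rw [h1, hj] at this
  simp at this

theorem headOK_mul_of {j : α} {e : Bool} {v : FreeGroup α} {i : α} (hij : j ≠ i)
    (hv : HeadOK j e v) : HeadOK j e (v * FreeGroup.of i) := by
  have hofi : FreeGroup.of i = FreeGroup.mk [(i, true)] := rfl
  cases hL : v.toWord with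
  | nil =>
    have hv1 : v = 1 := FreeGroup.toWord_eq_nil_iff.mp hL
    rw [hv1, one_mul]
    intro l hl
    rw [FreeGroup.toWord_of] at hl
    cases hl
    intro ⟨h1, _⟩
    exact hij h1.symm
  | cons hd tl =>
    by_cases hlast : (hd :: tl).getLast (by simp) = (i, false)
    · -- cancellation : v * of i = mk (dropLast)
      have hsplit : hd :: tl = (hd :: tl).dropLast ++ [(i, false)] := by
        conv_lhs => rw [← List.dropLast_append_getLast (l := hd :: tl) (by simp)]
        rw [hlast]
      have hvmk : v = FreeGroup.mk ((hd :: tl).dropLast) * FreeGroup.mk [(i, false)] := by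
        rw [FreeGroup.mul_mk, ← hsplit, ← hL, FreeGroup.mk_toWord]
      have hinv : FreeGroup.mk [(i, false)] = (FreeGroup.of i)⁻¹ := by
        rw [hofi, FreeGroup.inv_mk]
        rfl
      have hmul : v * FreeGroup.of i = FreeGroup.mk ((hd :: tl).dropLast) := by
        rw [hvmk, hinv, mul_assoc, inv_mul_cancel, mul_one]
      have hchain : List.Chain' NC ((hd :: tl).dropLast) :=
        List.IsChain.prefix (chain'_toWord v) (hL ▸ List.dropLast_prefix _)
      intro l hl
      rw [hmul, toWord_mk_eq hchain] at hl
      cases tl with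
      | nil => simp at hl
      | cons h2 t2 =>
        have : ((hd :: h2 :: t2).dropLast).head? = some hd := by
          simp [List.dropLast]
        rw [this] at hl
        cases hl
        exact hv hd (by rw [hL]; rfl)
    · -- no cancellation
      have hchain : List.Chain' NC ((hd :: tl) ++ [(i, true)]) := by
        simp only [List.Chain']; rw [List.isChain_append]
        refine ⟨hL ▸ chain'_toWord v, by simp, ?_⟩
        intro x hx y hy
        cases hy
        intro ⟨h1, h2⟩
        apply hlast
        have : x = (hd :: tl).getLast (by simp) := by
          rwa [List.getLast?_eq_getLast (l := hd :: tl) (by simp), Option.mem_some_iff, eq_comm] at hx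
        rw [← this]
        ext
        · exact h1
        · simpa using h2
      have hmul : v * FreeGroup.of i = FreeGroup.mk ((hd :: tl) ++ [(i, true)]) := by
        rw [hofi, ← FreeGroup.mul_mk, ← hL, FreeGroup.mk_toWord]
      intro l hl
      rw [hmul, toWord_mk_eq hchain] at hl
      simp at hl
      cases hl
      exact hv hd (by rw [hL]; rfl)


namespace Stmt12

abbrev F := FreeGroup (Fin 3)
noncomputable abbrev a : F := FreeGroup.of 0
noncomputable abbrev b : F := FreeGroup.of 1
noncomputable abbrev c : F := FreeGroup.of 2

/-- letters equal to 2 -/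
def p2 : Fin 3 → Bool := fun i => i == 2
/-- letters not equal to 0 -/
def pn : Fin 3 → Bool := fun i => !(i == 0)

noncomputable def ce (e : Bool) : F := FreeGroup.mk [((2 : Fin 3), e)]

theorem ce_true : ce true = c := rfl

theorem ce_false : ce false = c⁻¹ := by
  have : c⁻¹ = FreeGroup.mk (FreeGroup.invRev [((2 : Fin 3), true)]) := by
    rw [← FreeGroup.inv_mk]; rfl
  rw [this]; rfl

theorem mk_mem_closure_ab : ∀ (L : List (Fin 3 × Bool)), (∀ l ∈ L, p2 l.1 = false) →
    FreeGroup.mk L ∈ Subgroup.closure {a, b} := by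
  intro L
  induction L with
  | nil =>
    intro _
    rw [← FreeGroup.one_eq_mk]
    exact Subgroup.one_mem _
  | cons x t ih =>
    intro h
    obtain ⟨x1, x2⟩ := x
    have hx : FreeGroup.mk [(x1, x2)] ∈ Subgroup.closure {a, b} := by
      have hx1 : p2 x1 = false := h (x1, x2) (by simp)
      have : x1 = 0 ∨ x1 = 1 := by
        have : x1 ≠ 2 := by
          intro h2; rw [p2, h2] at hx1; simp at hx1
        omega
      have hofmem : FreeGroup.of x1 ∈ Subgroup.closure {a, b} := by
        rcases this with h' | h' <;> rw [h'] <;>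
          exact Subgroup.subset_closure (by simp [a, b])
      cases x2 with
      | true => exact hofmem
      | false =>
        have : FreeGroup.mk [(x1, false)] = (FreeGroup.of x1)⁻¹ := by
          rw [show (FreeGroup.of x1)⁻¹ = FreeGroup.mk (FreeGroup.invRev [(x1, true)]) by
            rw [← FreeGroup.inv_mk]; rfl]
          rfl
        rw [this]; exact Subgroup.inv_mem _ hofmem
    have : FreeGroup.mk ((x1, x2) :: t) = FreeGroup.mk [(x1, x2)] * FreeGroup.mk t := by
      rw [FreeGroup.mul_mk]; rfl
    rw [this]
    exact Subgroup.mul_mem _ hx (ih fun l hl => h l (by simp [hl]))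

theorem avoid_iff_mem_closure {g : F} : Avoid p2 g ↔ g ∈ Subgroup.closure {a, b} := by
  constructor
  · intro h
    rw [← FreeGroup.mk_toWord (x := g)]
    exact mk_mem_closure_ab _ h
  · intro h
    refine Subgroup.closure_induction ?_ ?_ ?_ ?_ h
    · rintro x (rfl | rfl)
      · exact avoid_of (by decide)
      · exact avoid_of (by decide)
    · exact Avoid.one
    · intro x y _ _ hx hy; exact hx.mul hy
    · intro x _ hx; exact hx.inv

theorem p2_two : p2 2 = true := by decide

theorem normal_form_ce {u : F} (hu : Avoid p2 u) {e : Bool} {v : F} (hv : HeadOK 2 e v) :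
    (u * ce e * v).toWord = u.toWord ++ ((2 : Fin 3), e) :: v.toWord :=
  normal_form hu p2_two hv

section Core

variable (β : F ≃* F) (h0 : β a = a) (h1 : β b = a * b * a⁻¹)
  (h2 : β c = (a * b) * c * (a * b)⁻¹)

include h0 h1 h2

theorem beta_avoid {g : F} (hg : Avoid p2 g) : Avoid p2 (β g) := by
  rw [avoid_iff_mem_closure] at hg ⊢
  refine Subgroup.closure_induction ?_ ?_ ?_ ?_ hg
  · rintro x (rfl | rfl)
    · rw [h0]; exact Subgroup.subset_closure (by simp)
    · rw [h1]
      have ha : a ∈ Subgroup.closure ({a, b} : Set F) := Subgroup.subset_closure (by simp)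
      have hb : b ∈ Subgroup.closure ({a, b} : Set F) := Subgroup.subset_closure (by simp)
      exact Subgroup.mul_mem _ (Subgroup.mul_mem _ ha hb) (Subgroup.inv_mem _ ha)
  · rw [_root_.map_one]; exact Subgroup.one_mem _
  · intro x y _ _ hx hy; rw [_root_.map_mul]; exact Subgroup.mul_mem _ hx hy
  · intro x _ hx; rw [_root_.map_inv]; exact Subgroup.inv_mem _ hx

theorem beta_ce (e : Bool) : β (ce e) = (a * b) * ce e * (a * b)⁻¹ := by
  cases e
  · rw [ce_false, _root_.map_inv, h2]
    group
  · rw [ce_true]; exact h2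

theorem stageR : ∀ (n : ℕ) (g : F), g.toWord.length ≤ n → ¬ Avoid p2 g →
    ∃ u e v, Avoid p2 u ∧ HeadOK 2 e v ∧ g = u * ce e * v ∧
      HeadOK 2 e ((a * b)⁻¹ * β v) := by
  intro n
  induction n with
  | zero =>
    intro g hlen hg
    exfalso
    apply hg
    intro l hl
    rw [List.length_eq_zero_iff.mp (Nat.le_zero.mp hlen)] at hl
    simp at hl
  | succ n ih =>
    intro g hlen hg
    have hex : ∃ l ∈ g.toWord, p2 l.1 = true := by
      by_contra hno
      push_neg at hno
      exact hg fun l hl => by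
        have := hno l hl
        cases hpl : p2 l.1
        · rfl
        · exact absurd hpl this
    obtain ⟨u, j, e, v, hu, hj, hv, hgeq, hw⟩ := exists_split hex
    have hj2 : j = 2 := by
      rw [p2] at hj; simpa using hj
    subst hj2
    have hvlen : v.toWord.length ≤ n := by
      have := congrArg List.length hw
      simp at this
      omega
    refine ⟨u, e, v, hu, hv, by rw [hgeq]; rfl, ?_⟩
    by_cases hva : Avoid p2 v
    · exact headOK_of_avoid p2_two (((avoid_of (by decide)).mul (avoid_of (by decide))).inv.mul
        (beta_avoid β h0 h1 h2 hva))
    · obtain ⟨u', f, v', hu', hv', hveq, htail⟩ := ih v hvlen hva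
      have hP : Avoid p2 ((a * b)⁻¹ * β u' * (a * b)) :=
        (((avoid_of (by decide)).mul (avoid_of (by decide))).inv.mul (beta_avoid β h0 h1 h2 hu')).mul
          ((avoid_of (by decide)).mul (avoid_of (by decide)))
      have hdecomp : (a * b)⁻¹ * β v =
          ((a * b)⁻¹ * β u' * (a * b)) * ce f * ((a * b)⁻¹ * β v') := by
        rw [hveq, _root_.map_mul, _root_.map_mul, beta_ce β h0 h1 h2]
        group
      by_cases hu'1 : u' = 1
      · -- adjacent 2-letters; signs must agree
        have hfe : f = e := by
          have hvword : v.toWord = ((2 : Fin 3), f) :: v'.toWord := by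
            rw [hveq, hu'1, one_mul]
            have := normal_form_ce Avoid.one hv'
            rw [one_mul] at this
            rw [this, FreeGroup.toWord_one]
            rfl
          have := hv ((2 : Fin 3), f) (by rw [hvword]; rfl)
          simp at this
          cases e <;> cases f <;> simp_all
        have hP1 : (a * b)⁻¹ * β u' * (a * b) = 1 := by
          rw [hu'1, _root_.map_one]; group
        rw [hdecomp, hP1, one_mul]
        intro l hl
        have hword := normal_form_ce Avoid.one htail
        rw [one_mul] at hword
        rw [hword, FreeGroup.toWord_one] at hl
        cases hl
        simp [hfe]
      · -- nontrivial block between the 2-letters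
        rw [hdecomp]
        intro l hl
        rw [normal_form_ce hP htail] at hl
        have hPne : ((a * b)⁻¹ * β u' * (a * b)).toWord ≠ [] := by
          rw [ne_eq, FreeGroup.toWord_eq_nil_iff]
          intro hzero
          apply hu'1
          have : β u' = 1 := by
            have := congrArg (fun t => (a * b) * t * (a * b)⁻¹) hzero
            rw [show (a*b) * ((a*b)⁻¹ * β u' * (a*b)) * (a*b)⁻¹ = β u' by group] at this
            rw [this]; group
          exact β.injective (by rw [this, _root_.map_one])
        obtain ⟨x, t, hxt⟩ := List.exists_cons_of_ne_nil hPne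
        rw [hxt] at hl
        have hlx : l = x := by simpa using hl.symm
        have : p2 l.1 = false := hP l (by rw [hxt, hlx]; simp)
        intro ⟨hc, _⟩
        rw [p2, hc] at this
        simp at this

theorem fixed_avoid {g : F} (hfix : β g = g) : Avoid p2 g := by
  by_contra hg
  obtain ⟨u, e, v, hu, hv, hgeq, htail⟩ :=
    stageR β h0 h1 h2 (g.toWord.length) g le_rfl hg
  have hu2 : Avoid p2 (β u * (a * b)) :=
    (beta_avoid β h0 h1 h2 hu).mul ((avoid_of (by decide)).mul (avoid_of (by decide)))
  have heq : (β u * (a * b)) * ce e * ((a * b)⁻¹ * β v) = u * ce e * v := by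
    have : β g = β u * ((a * b) * ce e * (a * b)⁻¹) * β v := by
      rw [hgeq, _root_.map_mul, _root_.map_mul, beta_ce β h0 h1 h2]
    rw [hfix] at this
    rw [← hgeq, this]
    group
  have := split_unique' (p := p2) hu2 hu p2_two p2_two htail hv heq
  obtain ⟨hueq, -, -, -⟩ := this
  -- now count b-exponents
  set φb : F →* Multiplicative ℤ :=
    FreeGroup.lift (fun i : Fin 3 => if i = 1 then Multiplicative.ofAdd (1 : ℤ) else 1) with hφ
  have hβφ : ∀ w : F, φb (β w) = φb w := by
    have : φb.comp (β : F →* F) = φb := by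
      apply FreeGroup.ext_hom
      intro i
      fin_cases i
      · show φb (β a) = φb a
        rw [h0]
      · show φb (β b) = φb b
        rw [h1]
        simp [hφ]
      · show φb (β c) = φb c
        rw [h2]
        simp [hφ]
    intro w
    exact congrFun (congrArg DFunLike.coe this) w
  have hcontr := congrArg φb hueq
  rw [_root_.map_mul, _root_.map_mul, hβφ] at hcontr
  have : φb a * φb b = 1 := by
    have := hcontr.symm
    rwa [left_eq_mul] at this
  rw [hφ] at this
  simp [FreeGroup.lift_apply_of] at this

end Core

theorem pn_zero : pn 0 = false := by decide

theorem all_zero_mem_zpowers : ∀ (L : List (Fin 3 × Bool)), List.Chain' NC L →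
    (∀ l ∈ L, pn l.1 = false) → FreeGroup.mk L ∈ Subgroup.zpowers a := by
  intro L
  induction L with
  | nil =>
    intro _ _
    rw [← FreeGroup.one_eq_mk]
    exact Subgroup.one_mem _
  | cons x t ih =>
    intro hch h
    obtain ⟨x1, x2⟩ := x
    have hx0 : x1 = 0 := by
      have := h (x1, x2) (by simp)
      rw [pn] at this
      simpa using this
    subst hx0
    have hsplit : FreeGroup.mk (((0 : Fin 3), x2) :: t) =
        FreeGroup.mk [((0 : Fin 3), x2)] * FreeGroup.mk t := by
      rw [FreeGroup.mul_mk]; rfl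
    rw [hsplit]
    refine Subgroup.mul_mem _ ?_ (ih (List.IsChain.tail hch) fun l hl => h l (by simp [hl]))
    cases x2 with
    | true => exact Subgroup.mem_zpowers a
    | false =>
      have : FreeGroup.mk [((0 : Fin 3), false)] = a⁻¹ := by
        rw [show (a : F)⁻¹ = FreeGroup.mk (FreeGroup.invRev [((0 : Fin 3), true)]) by
          rw [← FreeGroup.inv_mk]; rfl]
        rfl
      rw [this]
      exact Subgroup.inv_mem _ (Subgroup.mem_zpowers a)

theorem commute_mem_zpowers {g : F} (hc : a * g = g * a) : g ∈ Subgroup.zpowers a := by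
  by_cases hav : Avoid pn g
  · rw [← FreeGroup.mk_toWord (x := g)]
    exact all_zero_mem_zpowers _ (chain'_toWord g) hav
  · exfalso
    have hex : ∃ l ∈ g.toWord, pn l.1 = true := by
      by_contra hno
      push_neg at hno
      exact hav fun l hl => by
        have := hno l hl
        cases hpl : pn l.1
        · rfl
        · exact absurd hpl this
    obtain ⟨u, j, e, v, hu, hj, hv, hgeq, hw⟩ := exists_split hex
    have hj0 : j ≠ 0 := by
      intro h; rw [h, pn_zero] at hj; simp at hj
    have heq : (a * u) * FreeGroup.mk [(j, e)] * v =
        u * FreeGroup.mk [(j, e)] * (v * a) := by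
      have l1 : a * g = (a * u) * FreeGroup.mk [(j, e)] * v := by rw [hgeq]; group
      have l2 : g * a = u * FreeGroup.mk [(j, e)] * (v * a) := by rw [hgeq]; group
      rw [← l1, ← l2, hc]
    have := split_unique' (p := pn) ((avoid_of pn_zero).mul hu) hu hj hj
      hv (headOK_mul_of hj0 hv) ?_
    · obtain ⟨h1, -, -, -⟩ := this
      have : a = 1 := by
        have := h1
        rwa [mul_eq_right] at this
      exact FreeGroup.of_ne_one (0 : Fin 3) this
    ·
      exact heq

theorem core (β : F ≃* F) (h0 : β a = a) (h1 : β b = a * b * a⁻¹)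
    (h2 : β c = (a * b) * c * (a * b)⁻¹) :
    ∀ g : F, β g = g ↔ g ∈ Subgroup.zpowers a := by
  intro g
  constructor
  · intro hfix
    have hav : Avoid p2 g := fixed_avoid β h0 h1 h2 hfix
    have hmem : g ∈ Subgroup.closure {a, b} := avoid_iff_mem_closure.mp hav
    have hconj : β g = a * g * a⁻¹ := by
      have hle : Subgroup.closure ({a, b} : Set F) ≤
          (β : F →* F).eqLocus ((MulAut.conj a : F ≃* F) : F →* F) := by
        rw [Subgroup.closure_le]
        rintro x (rfl | rfl)
        · show β a = a * a * a⁻¹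
          rw [h0]; group
        · show β b = a * b * a⁻¹
          rw [h1]
      have := hle hmem
      exact this
    rw [hfix] at hconj
    apply commute_mem_zpowers
    have := congrArg (fun t => t * a) hconj
    rw [inv_mul_cancel_right] at this
    rw [← this]
  · intro hmem
    obtain ⟨k, hk⟩ := Subgroup.mem_zpowers_iff.mp hmem
    rw [← hk, map_zpow, h0]

end Stmt12



open Stmt12 in
theorem stmt_12
    (x y z : FreeGroup (Fin 3))
    (hx : x = FreeGroup.of 0 * FreeGroup.of 1 * FreeGroup.of 2)
    (hy : y = FreeGroup.of 2)
    (hz : z = FreeGroup.of 0)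
    (α : FreeGroup (Fin 3) ≃* FreeGroup (Fin 3))
    (hαx : α x = x)
    (hαy : α y = x * y * x⁻¹)
    (hαz : α z = (x * y) * z * (x * y)⁻¹) :
    ∀ g : FreeGroup (Fin 3), α g = g ↔ g ∈ Subgroup.zpowers x := by
  classical
  set θh : F →* F := FreeGroup.lift
    (fun i : Fin 3 => if i = 0 then a * b * c else if i = 1 then c else a) with hθh
  set σh : F →* F := FreeGroup.lift
    (fun i : Fin 3 => if i = 0 then c else if i = 1 then c⁻¹ * a * b⁻¹ else b) with hσh
  have hθ0 : θh (FreeGroup.of 0) = a * b * c := by rw [hθh]; simp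
  have hθ1 : θh (FreeGroup.of 1) = c := by rw [hθh]; simp
  have hθ2 : θh (FreeGroup.of 2) = a := by rw [hθh]; simp
  have hσ0 : σh (FreeGroup.of 0) = c := by rw [hσh]; simp
  have hσ1 : σh (FreeGroup.of 1) = c⁻¹ * a * b⁻¹ := by rw [hσh]; simp
  have hσ2 : σh (FreeGroup.of 2) = b := by rw [hσh]; simp
  have hσθ : σh.comp θh = MonoidHom.id F := by
    apply FreeGroup.ext_hom
    intro i
    fin_cases i
    · show σh (θh (FreeGroup.of 0)) = FreeGroup.of 0
      rw [hθ0, _root_.map_mul, _root_.map_mul, hσ0, hσ1, hσ2]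
      group
    · show σh (θh (FreeGroup.of 1)) = FreeGroup.of 1
      rw [hθ1, hσ2]
    · show σh (θh (FreeGroup.of 2)) = FreeGroup.of 2
      rw [hθ2, hσ0]
  have hθσ : θh.comp σh = MonoidHom.id F := by
    apply FreeGroup.ext_hom
    intro i
    fin_cases i
    · show θh (σh (FreeGroup.of 0)) = FreeGroup.of 0
      rw [hσ0, hθ2]
    · show θh (σh (FreeGroup.of 1)) = FreeGroup.of 1
      rw [hσ1, _root_.map_mul, _root_.map_mul, _root_.map_inv, _root_.map_inv, hθ2, hθ0, hθ1]
      group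
    · show θh (σh (FreeGroup.of 2)) = FreeGroup.of 2
      rw [hσ2, hθ1]
  set θ : F ≃* F := MonoidHom.toMulEquiv θh σh hσθ hθσ with hθdef
  have hθap : ∀ w, θ w = θh w := fun w => rfl
  have hθsym : ∀ w, θ.symm w = σh w := fun w => rfl
  have hθx : θ (FreeGroup.of 0) = x := by rw [hθap, hθ0, hx]
  have hθy : θ (FreeGroup.of 1) = y := by rw [hθap, hθ1, hy]
  have hθz : θ (FreeGroup.of 2) = z := by rw [hθap, hθ2, hz]
  set β : F ≃* F := θ.trans (α.trans θ.symm) with hβdef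
  have hβap : ∀ w, β w = θ.symm (α (θ w)) := fun w => rfl
  have h0 : β a = a := by
    rw [hβap, hθx, hαx, ← hθx, MulEquiv.symm_apply_apply]
  have h1 : β b = a * b * a⁻¹ := by
    rw [hβap, hθy, hαy, ← hθx, ← hθy]
    simp only [_root_.map_mul, _root_.map_inv, MulEquiv.symm_apply_apply]
  have h2 : β c = (Stmt12.a * b) * c * (Stmt12.a * b)⁻¹ := by
    rw [hβap, hθz, hαz, ← hθx, ← hθy, ← hθz]
    simp only [_root_.map_mul, _root_.map_inv, MulEquiv.symm_apply_apply]
  have hcore := core β h0 h1 h2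
  intro g
  have hg1 : α g = g ↔ β (θ.symm g) = θ.symm g := by
    constructor
    · intro h
      rw [hβap, MulEquiv.apply_symm_apply, h]
    · intro h
      rw [hβap, MulEquiv.apply_symm_apply] at h
      have := congrArg θ h
      simpa only [MulEquiv.apply_symm_apply] using this
  have hg2 : θ.symm g ∈ Subgroup.zpowers Stmt12.a ↔ g ∈ Subgroup.zpowers x := by
    rw [Subgroup.mem_zpowers_iff, Subgroup.mem_zpowers_iff]
    constructor
    · rintro ⟨k, hk⟩
      refine ⟨k, ?_⟩
      have := congrArg θ hk
      rwa [_root_.map_zpow, hθx, MulEquiv.apply_symm_apply] at this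
    · rintro ⟨k, hk⟩
      refine ⟨k, ?_⟩
      have := congrArg θ.symm hk
      rwa [_root_.map_zpow, ← hθx, MulEquiv.symm_apply_apply] at this
  rw [hg1, hcore (θ.symm g), hg2]
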